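/- (Lemma 1) If v₁,…,v_d are orthonormal and not all cᵢ are zero, then ‖r₀‖₂ = ‖c‖₂ and for every k ≥ 1 and every y ∈ ℂ^k there exists z ∈ K_k(A, r₀) such that ‖r₀ − A z‖₂ / ‖r₀‖₂ ≤ (‖c‖_∞ / ‖c‖₂) · ‖Λ y − 𝟙‖₂, where ‖c‖_∞ = max_{1≤i≤d}|cᵢ| and ‖c‖₂ = (Σ_{i=1}^d |cᵢ|²)^{1/2}. -/

import Mathlib

set_option maxHeartbeats 1000000


/-- The Euclidean (ℓ²) norm of a complex vector. -/
noncomputable def euclNorm {m : ℕ} (x : Fin m → ℂ) : ℝ :=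
  Real.sqrt (∑ t, ‖x t‖ ^ 2)

lemma euclNorm_sum_orthonormal {N d : ℕ} (v : Fin d → EuclideanSpace ℂ (Fin N))
    (hv : Orthonormal ℂ v) (w : Fin d → ℂ) :
    euclNorm (∑ i, w i • fun t => v i t) = Real.sqrt (∑ i, ‖w i‖ ^ 2) := by
  set u : EuclideanSpace ℂ (Fin N) := ∑ i, w i • v i with hu
  have hnorm : ‖u‖ = Real.sqrt (∑ i, ‖w i‖ ^ 2) := by
    rw [norm_eq_sqrt_re_inner (𝕜 := ℂ)]
    congr 1
    have := hv.inner_sum w w Finset.univ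
    rw [hu, this]
    rw [map_sum]
    refine Finset.sum_congr rfl fun i _ => ?_
    have : (starRingEnd ℂ) (w i) * w i = (‖w i‖ ^ 2 : ℝ) := by
      rw [mul_comm, Complex.mul_conj']
      push_cast
      ring
    rw [this]
    exact RCLike.ofReal_re _
  have hfun : (∑ i, w i • fun t => v i t) = fun t => u t := by
    funext t; simp [hu, Finset.sum_apply]
  rw [hfun]
  show Real.sqrt (∑ t, ‖u t‖ ^ 2) = _
  rw [← EuclideanSpace.norm_eq]
  exact hnorm

/-- Lemma 1: if `v₁,…,v_d` are orthonormal and not all `cᵢ` vanish, then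
`‖r₀‖₂ = ‖c‖₂` and for every `k ≥ 1` and every `y ∈ ℂ^k` there is `z ∈ K_k(A, r₀)` with
`‖r₀ − A z‖₂ / ‖r₀‖₂ ≤ (‖c‖_∞ / ‖c‖₂) ‖Λ y − 𝟙‖₂`. -/
theorem gmres_relative_residual_bound_orthonormal
    (n d : ℕ) (A : Matrix (Fin n) (Fin n) ℂ)
    (v : Fin d → EuclideanSpace ℂ (Fin n)) (hv : Orthonormal ℂ v)
    (lam : Fin d → ℂ) (c : Fin d → ℂ)
    (heig : ∀ i, A.mulVec (fun t => v i t) = lam i • fun t => v i t)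
    (hnz : ∀ i, lam i ≠ 0) (hdist : Function.Injective lam)
    (hc : c ≠ 0)
    (r₀ : Fin n → ℂ) (hr₀ : r₀ = ∑ i, c i • fun t => v i t) :
    euclNorm r₀ = Real.sqrt (∑ i, ‖c i‖ ^ 2) ∧
      ∀ k : ℕ, 1 ≤ k → ∀ y : Fin k → ℂ,
        ∃ z ∈ Submodule.span ℂ (Set.range fun j : Fin k => (A ^ (j : ℕ)).mulVec r₀),
          euclNorm (r₀ - A.mulVec z) / euclNorm r₀ ≤
            ((⨆ i, ‖c i‖) / Real.sqrt (∑ i, ‖c i‖ ^ 2)) *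
              euclNorm ((Matrix.of fun i (j : Fin k) => lam i ^ ((j : ℕ) + 1)).mulVec y
                - fun _ => 1) := by
  -- basic facts
  obtain ⟨i₀, hi₀⟩ : ∃ i, c i ≠ 0 := Function.ne_iff.mp hc
  have hd : Nonempty (Fin d) := ⟨i₀⟩
  set C : ℝ := Real.sqrt (∑ i, ‖c i‖ ^ 2) with hC
  set M : ℝ := ⨆ i, ‖c i‖ with hM
  have hCpos : 0 < C := by
    apply Real.sqrt_pos.mpr
    refine Finset.sum_pos' (fun i _ => by positivity) ⟨i₀, Finset.mem_univ _, ?_⟩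
    have : 0 < ‖c i₀‖ := norm_pos_iff.mpr hi₀
    positivity
  have hle : ∀ i, ‖c i‖ ≤ M := fun i =>
    le_ciSup (f := fun i => ‖c i‖) (Set.Finite.bddAbove (Set.finite_range _)) i
  have hM0 : 0 ≤ M := le_trans (norm_nonneg _) (hle i₀)
  have h1 : euclNorm r₀ = C := by
    rw [hr₀]; exact euclNorm_sum_orthonormal v hv c
  refine ⟨h1, fun k hk y => ?_⟩
  -- eigenvalue powers
  have hpow : ∀ (m : ℕ) (i : Fin d),
      (A ^ m).mulVec (fun t => v i t) = (lam i ^ m) • fun t => v i t := by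
    intro m i
    induction m with
    | zero => simp [Matrix.one_mulVec]
    | succ m ih =>
      rw [pow_succ, ← Matrix.mulVec_mulVec, heig i, Matrix.mulVec_smul, ih,
        smul_smul, pow_succ, mul_comm]
  have hAmr : ∀ m : ℕ, (A ^ m).mulVec r₀ = ∑ i, (c i * lam i ^ m) • fun t => v i t := by
    intro m
    have : (A ^ m).mulVec r₀ = (A ^ m).mulVecLin r₀ := rfl
    rw [this, hr₀, map_sum]
    refine Finset.sum_congr rfl fun i _ => ?_
    rw [map_smul, Matrix.mulVecLin_apply, hpow m i, smul_smul]
  -- the candidate z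
  set z : Fin n → ℂ := ∑ j : Fin k, y j • (A ^ (j : ℕ)).mulVec r₀ with hz
  have hzmem : z ∈ Submodule.span ℂ (Set.range fun j : Fin k => (A ^ (j : ℕ)).mulVec r₀) := by
    refine Submodule.sum_mem _ fun j _ => Submodule.smul_mem _ _ ?_
    exact Submodule.subset_span ⟨j, rfl⟩
  refine ⟨z, hzmem, ?_⟩
  -- compute A z
  set s : Fin d → ℂ := fun i => ∑ j : Fin k, lam i ^ ((j : ℕ) + 1) * y j with hs
  have hAz : A.mulVec z = ∑ i, (c i * s i) • fun t => v i t := by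
    have : A.mulVec z = A.mulVecLin z := rfl
    rw [this, hz, map_sum]
    have step : ∀ j : Fin k, A.mulVecLin (y j • (A ^ (j : ℕ)).mulVec r₀)
        = ∑ i, (c i * (lam i ^ ((j : ℕ) + 1) * y j)) • fun t => v i t := by
      intro j
      rw [map_smul, Matrix.mulVecLin_apply, Matrix.mulVec_mulVec, ← pow_succ', hAmr]
      rw [Finset.smul_sum]
      refine Finset.sum_congr rfl fun i _ => ?_
      rw [smul_smul]
      ring_nf
    rw [Finset.sum_congr rfl fun j _ => step j, Finset.sum_comm]
    refine Finset.sum_congr rfl fun i _ => ?_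
    rw [hs, Finset.mul_sum, Finset.sum_smul]
  have hres : r₀ - A.mulVec z = ∑ i, (c i * (1 - s i)) • fun t => v i t := by
    rw [hAz, hr₀, ← Finset.sum_sub_distrib]
    refine Finset.sum_congr rfl fun i _ => ?_
    rw [← sub_smul]
    congr 1
    ring
  have hresnorm : euclNorm (r₀ - A.mulVec z) = Real.sqrt (∑ i, ‖c i * (1 - s i)‖ ^ 2) := by
    rw [hres]; exact euclNorm_sum_orthonormal v hv _
  -- the RHS vector
  have hrhs : euclNorm ((Matrix.of fun i (j : Fin k) => lam i ^ ((j : ℕ) + 1)).mulVec y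
      - fun _ => 1) = Real.sqrt (∑ i, ‖s i - 1‖ ^ 2) := by
    have hfn : ((Matrix.of fun i (j : Fin k) => lam i ^ ((j : ℕ) + 1)).mulVec y
        - fun _ => 1) = fun i => s i - 1 := by
      funext i
      simp [Matrix.mulVec, dotProduct, hs]
    rw [hfn]
    unfold euclNorm
    rfl
  set E : ℝ := Real.sqrt (∑ i, ‖s i - 1‖ ^ 2) with hE
  have hbound : euclNorm (r₀ - A.mulVec z) ≤ M * E := by
    rw [hresnorm]
    have h2 : ∑ i, ‖c i * (1 - s i)‖ ^ 2 ≤ M ^ 2 * ∑ i, ‖s i - 1‖ ^ 2 := by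
      rw [Finset.mul_sum]
      refine Finset.sum_le_sum fun i _ => ?_
      rw [norm_mul, mul_pow]
      have h3 : ‖(1 : ℂ) - s i‖ = ‖s i - 1‖ := by rw [norm_sub_rev]
      rw [h3]
      have h4 : ‖c i‖ ^ 2 ≤ M ^ 2 := by
        apply pow_le_pow_left₀ (norm_nonneg _) (hle i)
      exact mul_le_mul_of_nonneg_right h4 (by positivity)
    calc Real.sqrt (∑ i, ‖c i * (1 - s i)‖ ^ 2)
        ≤ Real.sqrt (M ^ 2 * ∑ i, ‖s i - 1‖ ^ 2) := Real.sqrt_le_sqrt h2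
      _ = M * E := by
          rw [Real.sqrt_mul (by positivity), Real.sqrt_sq hM0, hE]
  rw [h1, hrhs, div_mul_eq_mul_div]
  exact (div_le_div_iff_of_pos_right hCpos).mpr hbound
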